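/- Let X ⊆ ℝⁿ be a compact MICP-representable set, N a positive integer, and for each i ∈ [N] let Q_i : X → ℝ be an MICP-representable continuous function. Let P = { p ∈ ℝ^N : p ≥ 0, Dp ≤ d, Σ_{i∈[N]} p_i = 1 } be a nonempty polyhedral ambiguity set, where D ∈ ℝ^{ℓ×N} and d ∈ ℝ^ℓ. Then the function g : X → ℝ defined by g(x) = min_{p∈P} Σ_{i∈[N]} p_i Q_i(x) is MICP-representable; moreover, letting γ¹, …, γ^s denote the (finitely many) extreme points of P, one has min_{x∈X} g(x) = min_{j∈[s]} min_{x∈X} Σ_{i∈[N]} γ^j_i Q_i(x). -/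
import Mathlib


/-- A set `S ⊆ E` (think `E = ℝⁿ`) is mixed-integer convex programming representable
(MICP-R) if there exist nonnegative integers `p`, `d` and a closed convex set
`M ⊆ E × ℝᵖ × ℝᵈ` such that `x ∈ S` iff there are `y ∈ ℝᵖ` and `z ∈ ℝᵈ` with all
coordinates of `z` integral and `(x, y, z) ∈ M`. -/
def IsMICPR {E : Type*} [AddCommGroup E] [Module ℝ E] [TopologicalSpace E]
    (S : Set E) : Prop :=
  ∃ (p d : ℕ) (M : Set (E × (Fin p → ℝ) × (Fin d → ℝ))),
    IsClosed M ∧ Convex ℝ M ∧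
      ∀ x : E, x ∈ S ↔ ∃ (y : Fin p → ℝ) (z : Fin d → ℝ),
        (∀ i, ∃ k : ℤ, z i = (k : ℝ)) ∧ (x, y, z) ∈ M

lemma isMICPR_of_finite {E : Type*} [AddCommGroup E] [Module ℝ E] [TopologicalSpace E]
    (S : Set E) (α β : Type) [Fintype α] [Fintype β]
    (M : Set (E × (α → ℝ) × (β → ℝ))) (hc : IsClosed M) (hv : Convex ℝ M)
    (hiff : ∀ x, x ∈ S ↔ ∃ (y : α → ℝ) (z : β → ℝ),
      (∀ b, ∃ k : ℤ, z b = (k : ℝ)) ∧ (x, y, z) ∈ M) : IsMICPR S := by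
  classical
  obtain ⟨eα⟩ : Nonempty (α ≃ Fin (Fintype.card α)) := ⟨Fintype.equivFin α⟩
  obtain ⟨eβ⟩ : Nonempty (β ≃ Fin (Fintype.card β)) := ⟨Fintype.equivFin β⟩
  refine ⟨Fintype.card α, Fintype.card β,
    {v | (v.1, v.2.1 ∘ eα, v.2.2 ∘ eβ) ∈ M}, ?_, ?_, ?_⟩
  · have hcont : Continuous (fun v : E × (Fin (Fintype.card α) → ℝ) × (Fin (Fintype.card β) → ℝ) =>
        (v.1, v.2.1 ∘ eα, v.2.2 ∘ eβ)) := by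
      refine continuous_fst.prodMk (Continuous.prodMk ?_ ?_)
      · exact continuous_pi fun a => (continuous_apply (eα a)).comp (continuous_fst.comp continuous_snd)
      · exact continuous_pi fun b => (continuous_apply (eβ b)).comp (continuous_snd.comp continuous_snd)
    exact hc.preimage hcont
  · rintro ⟨x1, y1, z1⟩ h1 ⟨x2, y2, z2⟩ h2 a b ha hb hab
    exact hv h1 h2 ha hb hab
  · intro x
    rw [hiff x]
    constructor
    · rintro ⟨y, z, hz, hM⟩
      refine ⟨y ∘ eα.symm, z ∘ eβ.symm, fun i => hz _, ?_⟩
      have h1 : (y ∘ eα.symm) ∘ eα = y := by ext a; simp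
      have h2 : (z ∘ eβ.symm) ∘ eβ = z := by ext b; simp
      simpa [h1, h2] using hM
    · rintro ⟨y, z, hz, hM⟩
      exact ⟨y ∘ eα, z ∘ eβ, fun b => hz _, hM⟩

lemma dfo_key {N l s : ℕ} (D : Matrix (Fin l) (Fin N) ℝ) (d : Fin l → ℝ)
    (P : Set (Fin N → ℝ))
    (hP : P = {p | (∀ i, 0 ≤ p i) ∧ (∀ j, (∑ i, D j i * p i) ≤ d j) ∧ (∑ i, p i) = 1})
    (hPne : P.Nonempty)
    (γ : Fin s → (Fin N → ℝ)) (hγ : Set.range γ = Set.extremePoints ℝ P)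
    (c : Fin N → ℝ) :
    ∃ j0 : Fin s, sInf {r : ℝ | ∃ p ∈ P, r = ∑ i, p i * c i} = ∑ i, γ j0 i * c i ∧
      ∀ j, (∑ i, γ j0 i * c i) ≤ ∑ i, γ j i * c i := by
  classical
  -- P is closed
  have hPeq : P = (⋂ i, {p : Fin N → ℝ | 0 ≤ p i}) ∩
      ((⋂ j, {p : Fin N → ℝ | ∑ i, D j i * p i ≤ d j}) ∩ {p | ∑ i, p i = 1}) := by
    rw [hP]; ext p; simp [Set.mem_iInter]
  have hPclosed : IsClosed P := by
    rw [hPeq]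
    refine IsClosed.inter (isClosed_iInter fun i =>
        isClosed_le continuous_const (continuous_apply i)) (IsClosed.inter ?_ ?_)
    · exact isClosed_iInter fun j => isClosed_le
        (continuous_finset_sum _ fun i _ => continuous_const.mul (continuous_apply i))
        continuous_const
    · exact isClosed_eq (continuous_finset_sum _ fun i _ => continuous_apply i)
        continuous_const
  have hPsub : P ⊆ Set.pi Set.univ (fun _ : Fin N => Set.Icc (0:ℝ) 1) := by
    rw [hP]
    rintro p ⟨h0, _, h1⟩ i _
    refine ⟨h0 i, ?_⟩
    calc p i ≤ ∑ i, p i := Finset.single_le_sum (fun i _ => h0 i) (Finset.mem_univ i)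
    _ = 1 := h1
  have hPcomp : IsCompact P :=
    (isCompact_univ_pi fun _ => isCompact_Icc).of_isClosed_subset hPclosed hPsub
  have hPconv : Convex ℝ P := by
    rw [hP]
    rintro p ⟨hp0, hpD, hp1⟩ q ⟨hq0, hqD, hq1⟩ a b ha hb hab
    have hcoord : ∀ i, (a • p + b • q) i = a * p i + b * q i := fun i => rfl
    refine ⟨fun i => ?_, fun j => ?_, ?_⟩
    · rw [hcoord]; exact add_nonneg (mul_nonneg ha (hp0 i)) (mul_nonneg hb (hq0 i))
    · have : ∑ i, D j i * (a • p + b • q) i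
          = a * (∑ i, D j i * p i) + b * (∑ i, D j i * q i) := by
        rw [Finset.mul_sum, Finset.mul_sum, ← Finset.sum_add_distrib]
        exact Finset.sum_congr rfl fun i _ => by rw [hcoord]; ring
      rw [this]
      calc a * (∑ i, D j i * p i) + b * (∑ i, D j i * q i)
          ≤ a * d j + b * d j := add_le_add (mul_le_mul_of_nonneg_left (hpD j) ha)
            (mul_le_mul_of_nonneg_left (hqD j) hb)
        _ = d j := by rw [← add_mul, hab, one_mul]
    · have : ∑ i, (a • p + b • q) i = a * (∑ i, p i) + b * (∑ i, q i) := by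
        rw [Finset.mul_sum, Finset.mul_sum, ← Finset.sum_add_distrib]
        exact Finset.sum_congr rfl fun i _ => by rw [hcoord]
      rw [this, hp1, hq1, mul_one, mul_one, hab]
  have hext : (Set.extremePoints ℝ P).Nonempty := hPcomp.extremePoints_nonempty hPne
  have hsne : Nonempty (Fin s) := by
    obtain ⟨e, he⟩ := hext
    rw [← hγ] at he
    obtain ⟨j, -⟩ := he
    exact ⟨j⟩
  have hγP : ∀ j, γ j ∈ P := fun j =>
    extremePoints_subset (hγ ▸ Set.mem_range_self j)
  obtain ⟨j0, -, hj0⟩ := Finset.exists_min_image Finset.univ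
    (fun j => ∑ i, γ j i * c i) Finset.univ_nonempty
  set m := ∑ i, γ j0 i * c i with hm
  have hmA : m ∈ {r : ℝ | ∃ p ∈ P, r = ∑ i, p i * c i} := ⟨γ j0, hγP j0, rfl⟩
  -- lower bound via Krein-Milman
  have hKM : closure (convexHull ℝ (Set.extremePoints ℝ P)) = P :=
    closure_convexHull_extremePoints hPcomp hPconv
  set H : Set (Fin N → ℝ) := {q | m ≤ ∑ i, q i * c i} with hH
  have hHclosed : IsClosed H := isClosed_le continuous_const
    (continuous_finset_sum _ fun i _ => (continuous_apply i).mul continuous_const)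
  have hHconv : Convex ℝ H := by
    rintro q1 h1 q2 h2 a b ha hb hab
    have : ∑ i, (a • q1 + b • q2) i * c i
        = a * (∑ i, q1 i * c i) + b * (∑ i, q2 i * c i) := by
      rw [Finset.mul_sum, Finset.mul_sum, ← Finset.sum_add_distrib]
      exact Finset.sum_congr rfl fun i _ => by show (a * q1 i + b * q2 i) * c i = _; ring
    show m ≤ _
    rw [this]
    calc m = a * m + b * m := by rw [← add_mul, hab, one_mul]
    _ ≤ a * (∑ i, q1 i * c i) + b * (∑ i, q2 i * c i) :=
        add_le_add (mul_le_mul_of_nonneg_left h1 ha) (mul_le_mul_of_nonneg_left h2 hb)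
  have hextH : Set.extremePoints ℝ P ⊆ H := by
    rw [← hγ]
    rintro - ⟨j, rfl⟩
    exact hj0 j (Finset.mem_univ j)
  have hPH : P ⊆ H := by
    rw [← hKM]
    exact closure_minimal (convexHull_min hextH hHconv) hHclosed
  have lb : ∀ r ∈ {r : ℝ | ∃ p ∈ P, r = ∑ i, p i * c i}, m ≤ r := by
    rintro r ⟨p, hp, rfl⟩
    exact hPH hp
  exact ⟨j0, le_antisymm (csInf_le ⟨m, lb⟩ hmA) (le_csInf ⟨m, hmA⟩ lb), fun j => hj0 j (Finset.mem_univ j)⟩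


/-- DFO over a polyhedral ambiguity set with finite support: if `X` is compact and
MICP-R and each `Q_i` is a continuous MICP-R function on `X`, then
`g(x) = min_{p∈P} ∑ᵢ pᵢ Q_i(x)` is MICP-R (its epigraph is MICP-R), and, with
`γ¹, …, γ^s` the extreme points of the polytope `P`,
`min_{x∈X} g(x) = min_{j∈[s]} min_{x∈X} ∑ᵢ γʲᵢ Q_i(x)`. -/
theorem dfo_finite_support_polyhedral_micpr {n N l s : ℕ} (hN : 0 < N)
    (X : Set (Fin n → ℝ)) (hXc : IsCompact X) (hX : IsMICPR X)
    (Q : Fin N → (Fin n → ℝ) → ℝ)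
    (hQcont : ∀ i, ContinuousOn (Q i) X)
    (hQmicp : ∀ i, IsMICPR {xt : (Fin n → ℝ) × ℝ | xt.1 ∈ X ∧ Q i xt.1 ≤ xt.2})
    (D : Matrix (Fin l) (Fin N) ℝ) (d : Fin l → ℝ)
    (P : Set (Fin N → ℝ))
    (hP : P = {p | (∀ i, 0 ≤ p i) ∧ (∀ j, (∑ i, D j i * p i) ≤ d j) ∧ (∑ i, p i) = 1})
    (hPne : P.Nonempty)
    (γ : Fin s → (Fin N → ℝ)) (hγ : Set.range γ = Set.extremePoints ℝ P) :
    let g : (Fin n → ℝ) → ℝ := fun x => sInf {r : ℝ | ∃ p ∈ P, r = ∑ i, p i * Q i x}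
    IsMICPR {xt : (Fin n → ℝ) × ℝ | xt.1 ∈ X ∧ g xt.1 ≤ xt.2} ∧
      sInf {r : ℝ | ∃ x ∈ X, r = g x} =
        sInf {r : ℝ | ∃ j : Fin s, ∃ x ∈ X, r = ∑ i, γ j i * Q i x} := by
  classical
  intro g
  have hgdef : ∀ x, g x = sInf {r : ℝ | ∃ p ∈ P, r = ∑ i, p i * Q i x} := fun _ => rfl
  -- extreme points belong to P
  have hγP : ∀ j, γ j ∈ P := fun j => extremePoints_subset (hγ ▸ Set.mem_range_self j)
  have hγ0 : ∀ j i, 0 ≤ γ j i := fun j i => ((hP ▸ hγP j).1 i)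
  have hγsum : ∀ j, ∑ i, γ j i = 1 := fun j => (hP ▸ hγP j).2.2
  -- uniform bound on the Q i over X
  choose Ci hCi using fun i => hXc.exists_bound_of_continuousOn (hQcont i)
  set C : ℝ := ∑ i, max 0 (Ci i) with hCdef
  have hC0 : 0 ≤ C := Finset.sum_nonneg fun i _ => le_max_left _ _
  have hQb : ∀ i, ∀ x ∈ X, |Q i x| ≤ C := by
    intro i x hx
    calc |Q i x| ≤ Ci i := by simpa [Real.norm_eq_abs] using hCi i x hx
    _ ≤ max 0 (Ci i) := le_max_right _ _
    _ ≤ C := Finset.single_le_sum (fun i (_ : i ∈ Finset.univ) => le_max_left 0 (Ci i))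
        (Finset.mem_univ i)
  have hLb : ∀ j, ∀ x ∈ X, |∑ i, γ j i * Q i x| ≤ C := by
    intro j x hx
    calc |∑ i, γ j i * Q i x| ≤ ∑ i, |γ j i * Q i x| := Finset.abs_sum_le_sum_abs _ _
    _ = ∑ i, γ j i * |Q i x| := Finset.sum_congr rfl fun i _ => by
        rw [abs_mul, abs_of_nonneg (hγ0 j i)]
    _ ≤ ∑ i, γ j i * C := Finset.sum_le_sum
        (fun i _ => mul_le_mul_of_nonneg_left (hQb i x hx) (hγ0 j i))
    _ = C := by rw [← Finset.sum_mul, hγsum, one_mul]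
  -- the key: g is the min over the extreme points
  have hkey : ∀ x, ∃ j0 : Fin s, g x = ∑ i, γ j0 i * Q i x ∧
      ∀ j, (∑ i, γ j0 i * Q i x) ≤ ∑ i, γ j i * Q i x := by
    intro x
    obtain ⟨j0, h1, h2⟩ := dfo_key D d P hP hPne γ hγ (fun i => Q i x)
    exact ⟨j0, h1, h2⟩
  have hg_lb : ∀ x ∈ X, -C ≤ g x := by
    intro x hx
    obtain ⟨j0, h1, -⟩ := hkey x
    rw [h1]
    exact neg_le_of_abs_le (hLb j0 x hx)
  constructor
  · -- MICP representability of the epigraph of g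
    obtain ⟨p0, d0, M0, hM0c, hM0v, hM0⟩ := hX
    choose pQ dQ MQ hMQc hMQv hMQ using hQmicp
    refine isMICPR_of_finite _ (Fin p0 ⊕ ((Σ i : Fin N, Fin (pQ i)) ⊕ Fin N))
      (Fin d0 ⊕ ((Σ i : Fin N, Fin (dQ i)) ⊕ Fin s))
      {v : ((Fin n → ℝ) × ℝ) × ((Fin p0 ⊕ ((Σ i : Fin N, Fin (pQ i)) ⊕ Fin N)) → ℝ) × ((Fin d0 ⊕ ((Σ i : Fin N, Fin (dQ i)) ⊕ Fin s)) → ℝ) | ((v.1.1, fun k => v.2.1 (Sum.inl k), fun k => v.2.2 (Sum.inl k)) ∈ M0) ∧ (∀ i : Fin N, ((v.1.1, v.2.1 (Sum.inr (Sum.inr i))), fun k => v.2.1 (Sum.inr (Sum.inl ⟨i, k⟩)), fun k => v.2.2 (Sum.inr (Sum.inl ⟨i, k⟩))) ∈ MQ i) ∧ (∀ j : Fin s, (∑ i, γ j i * v.2.1 (Sum.inr (Sum.inr i))) ≤ v.1.2 + 2 * C * (1 - v.2.2 (Sum.inr (Sum.inr j)))) ∧ (∀ j : Fin s, 0 ≤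 v.2.2 (Sum.inr (Sum.inr j)) ∧ v.2.2 (Sum.inr (Sum.inr j)) ≤ 1) ∧ ((∑ j : Fin s, v.2.2 (Sum.inr (Sum.inr j))) = 1)} ?_ ?_ ?_
    · -- closedness
      have hc1 : IsClosed {v : ((Fin n → ℝ) × ℝ) × ((Fin p0 ⊕ ((Σ i : Fin N, Fin (pQ i)) ⊕ Fin N)) → ℝ) × ((Fin d0 ⊕ ((Σ i : Fin N, Fin (dQ i)) ⊕ Fin s)) → ℝ) | (v.1.1, fun k => v.2.1 (Sum.inl k), fun k => v.2.2 (Sum.inl k)) ∈ M0} := by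
        refine hM0c.preimage (Continuous.prodMk continuous_fst.fst (Continuous.prodMk ?_ ?_))
        · exact continuous_pi fun k => (continuous_apply _).comp continuous_snd.fst
        · exact continuous_pi fun k => (continuous_apply _).comp continuous_snd.snd
      have hc2 : IsClosed {v : ((Fin n → ℝ) × ℝ) × ((Fin p0 ⊕ ((Σ i : Fin N, Fin (pQ i)) ⊕ Fin N)) → ℝ) × ((Fin d0 ⊕ ((Σ i : Fin N, Fin (dQ i)) ⊕ Fin s)) → ℝ) | ∀ i : Fin N, ((v.1.1, v.2.1 (Sum.inr (Sum.inr i))), fun k => v.2.1 (Sum.inr (Sum.inl ⟨i, k⟩)), fun k => v.2.2 (Sum.inr (Sum.inl ⟨i, k⟩))) ∈ MQ i} := by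
        rw [Set.setOf_forall]
        refine isClosed_iInter fun i => (hMQc i).preimage ?_
        refine Continuous.prodMk (Continuous.prodMk continuous_fst.fst
          ((continuous_apply _).comp continuous_snd.fst)) (Continuous.prodMk ?_ ?_)
        · exact continuous_pi fun k => (continuous_apply _).comp continuous_snd.fst
        · exact continuous_pi fun k => (continuous_apply _).comp continuous_snd.snd
      have hc3 : IsClosed {v : ((Fin n → ℝ) × ℝ) × ((Fin p0 ⊕ ((Σ i : Fin N, Fin (pQ i)) ⊕ Fin N)) → ℝ) × ((Fin d0 ⊕ ((Σ i : Fin N, Fin (dQ i)) ⊕ Fin s)) → ℝ) | ∀ j : Fin s, (∑ i, γ j i * v.2.1 (Sum.inr (Sum.inr i))) ≤ v.1.2 + 2 * C * (1 - v.2.2 (Sum.inr (Sum.inr j)))} := by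
        rw [Set.setOf_forall]
        refine isClosed_iInter fun j => isClosed_le ?_ ?_
        · exact continuous_finset_sum _ fun i _ =>
            continuous_const.mul ((continuous_apply _).comp continuous_snd.fst)
        · exact (continuous_fst.snd).add (continuous_const.mul
            (continuous_const.sub ((continuous_apply _).comp continuous_snd.snd)))
      have hc4 : IsClosed {v : ((Fin n → ℝ) × ℝ) × ((Fin p0 ⊕ ((Σ i : Fin N, Fin (pQ i)) ⊕ Fin N)) → ℝ) × ((Fin d0 ⊕ ((Σ i : Fin N, Fin (dQ i)) ⊕ Fin s)) → ℝ) | ∀ j : Fin s, 0 ≤ v.2.2 (Sum.inr (Sum.inr j)) ∧ v.2.2 (Sum.inr (Sum.inr j)) ≤ 1} := by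
        rw [Set.setOf_forall]
        refine isClosed_iInter fun j => IsClosed.inter ?_ ?_
        · exact isClosed_le continuous_const ((continuous_apply _).comp continuous_snd.snd)
        · exact isClosed_le ((continuous_apply _).comp continuous_snd.snd) continuous_const
      have hc5 : IsClosed {v : ((Fin n → ℝ) × ℝ) × ((Fin p0 ⊕ ((Σ i : Fin N, Fin (pQ i)) ⊕ Fin N)) → ℝ) × ((Fin d0 ⊕ ((Σ i : Fin N, Fin (dQ i)) ⊕ Fin s)) → ℝ) | (∑ j : Fin s, v.2.2 (Sum.inr (Sum.inr j))) = 1} := by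
        exact isClosed_eq (continuous_finset_sum _ fun j _ =>
          (continuous_apply _).comp continuous_snd.snd) continuous_const
      exact hc1.inter (hc2.inter (hc3.inter (hc4.inter hc5)))
    · -- convexity
      rintro v1 ⟨h11, h12, h13, h14, h15⟩ v2 ⟨h21, h22, h23, h24, h25⟩ a b ha hb hab
      have habC : a * C + b * C = C := by rw [← add_mul, hab, one_mul]
      refine ⟨hM0v h11 h21 ha hb hab, fun i => hMQv i (h12 i) (h22 i) ha hb hab,
        fun j => ?_, fun j => ⟨?_, ?_⟩, ?_⟩
      · show (∑ i, γ j i * (a • v1 + b • v2).2.1 (Sum.inr (Sum.inr i))) ≤ _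
        simp only [Prod.fst_add, Prod.snd_add, Prod.smul_fst, Prod.smul_snd, Pi.add_apply,
          Pi.smul_apply, smul_eq_mul]
        have e : ∑ i, γ j i * (a * v1.2.1 (Sum.inr (Sum.inr i)) + b * v2.2.1 (Sum.inr (Sum.inr i)))
            = a * (∑ i, γ j i * v1.2.1 (Sum.inr (Sum.inr i)))
              + b * (∑ i, γ j i * v2.2.1 (Sum.inr (Sum.inr i))) := by
          rw [Finset.mul_sum, Finset.mul_sum, ← Finset.sum_add_distrib]
          exact Finset.sum_congr rfl fun i _ => by ring
        rw [e]
        have m1 := mul_le_mul_of_nonneg_left (h13 j) ha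
        have m2 := mul_le_mul_of_nonneg_left (h23 j) hb
        linarith [m1, m2, habC]
      · show 0 ≤ (a • v1 + b • v2).2.2 (Sum.inr (Sum.inr j))
        simp only [Prod.snd_add, Prod.smul_snd, Pi.add_apply, Pi.smul_apply, smul_eq_mul]
        exact add_nonneg (mul_nonneg ha (h14 j).1) (mul_nonneg hb (h24 j).1)
      · show (a • v1 + b • v2).2.2 (Sum.inr (Sum.inr j)) ≤ 1
        simp only [Prod.snd_add, Prod.smul_snd, Pi.add_apply, Pi.smul_apply, smul_eq_mul]
        have m1 := mul_le_mul_of_nonneg_left (h14 j).2 ha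
        have m2 := mul_le_mul_of_nonneg_left (h24 j).2 hb
        linarith
      · show (∑ j : Fin s, (a • v1 + b • v2).2.2 (Sum.inr (Sum.inr j))) = 1
        simp only [Prod.snd_add, Prod.smul_snd, Pi.add_apply, Pi.smul_apply, smul_eq_mul]
        rw [Finset.sum_add_distrib, ← Finset.mul_sum, ← Finset.mul_sum, h15, h25,
          mul_one, mul_one, hab]
    · -- the representation is correct
      rintro ⟨x, t⟩
      constructor
      · rintro ⟨hxX, hgt⟩
        replace hxX : x ∈ X := hxX
        replace hgt : g x ≤ t := hgt
        obtain ⟨j0, hj0, hj0min⟩ := hkey x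
        obtain ⟨y0, z0, hz0, hm0⟩ := (hM0 x).mp hxX
        choose yQ zQ hzQ hmQ using fun i => (hMQ i (x, Q i x)).mp ⟨hxX, le_rfl⟩
        refine ⟨Sum.elim y0 (Sum.elim (fun q => yQ q.1 q.2) (fun i => Q i x)),
          Sum.elim z0 (Sum.elim (fun q => zQ q.1 q.2) (fun j => if j = j0 then 1 else 0)),
          ?_, hm0, fun i => hmQ i, fun j => ?_, fun j => ?_, ?_⟩
        · rintro (k | (⟨i, k⟩ | j))
          · exact hz0 k
          · exact hzQ i k
          · refine ⟨if j = j0 then 1 else 0, ?_⟩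
            by_cases h : j = j0 <;> simp [h]
        · show (∑ i, γ j i * Q i x) ≤ t + 2 * C * (1 - if j = j0 then 1 else 0)
          rcases eq_or_ne j j0 with rfl | h
          · rw [if_pos rfl]
            have h' : g x ≤ t := hgt
            rw [hj0] at h'
            linarith
          · rw [if_neg h]
            have hb1 := abs_le.mp (hLb j x hxX)
            have hb2 := hg_lb x hxX
            linarith [hb1.2, hb2, hgt]
        · show 0 ≤ (if j = j0 then (1:ℝ) else 0) ∧ (if j = j0 then (1:ℝ) else 0) ≤ 1
          by_cases h : j = j0 <;> simp [h]
        · show (∑ j : Fin s, if j = j0 then (1:ℝ) else 0) = 1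
          simp
      · rintro ⟨y, z, hzint, h1, h2, h3, h4, h5⟩
        dsimp only at h1 h2 h3 h4 h5
        have hxX : x ∈ X := (hM0 x).mpr ⟨_, _, fun k => hzint (Sum.inl k), h1⟩
        have hQτ : ∀ i, Q i x ≤ y (Sum.inr (Sum.inr i)) := fun i =>
          ((hMQ i (x, y (Sum.inr (Sum.inr i)))).mpr
            ⟨_, _, fun k => hzint (Sum.inr (Sum.inl ⟨i, k⟩)), h2 i⟩).2
        have hw01 : ∀ j : Fin s, z (Sum.inr (Sum.inr j)) = 0 ∨ z (Sum.inr (Sum.inr j)) = 1 := by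
          intro j
          obtain ⟨k, hk⟩ := hzint (Sum.inr (Sum.inr j))
          have h40 := (h4 j).1
          have h41 := (h4 j).2
          rw [hk] at h40 h41
          have hk0 : (0:ℤ) ≤ k := by exact_mod_cast h40
          have hk1 : k ≤ 1 := by exact_mod_cast h41
          rcases (by omega : k = 0 ∨ k = 1) with rfl | rfl
          · left; rw [hk]; norm_num
          · right; rw [hk]; norm_num
        have hex : ∃ j : Fin s, z (Sum.inr (Sum.inr j)) = 1 := by
          by_contra hno
          push_neg at hno
          have hz0' : ∀ j ∈ Finset.univ, z (Sum.inr (Sum.inr j)) = 0 :=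
            fun j _ => (hw01 j).resolve_right (hno j)
          rw [Finset.sum_eq_zero hz0'] at h5
          norm_num at h5
        obtain ⟨j', hj'⟩ := hex
        obtain ⟨j0, hj0, hj0min⟩ := hkey x
        have hL : (∑ i, γ j' i * y (Sum.inr (Sum.inr i))) ≤ t := by
          have h3' := h3 j'
          rw [hj'] at h3'
          simpa using h3'
        have hmono : (∑ i, γ j' i * Q i x) ≤ ∑ i, γ j' i * y (Sum.inr (Sum.inr i)) :=
          Finset.sum_le_sum fun i _ => mul_le_mul_of_nonneg_left (hQτ i) (hγ0 j' i)
        refine ⟨hxX, ?_⟩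
        show g x ≤ t
        calc g x = ∑ i, γ j0 i * Q i x := hj0
        _ ≤ ∑ i, γ j' i * Q i x := hj0min j'
        _ ≤ t := le_trans hmono hL
  · -- equality of the two infima
    rcases X.eq_empty_or_nonempty with hXe | ⟨x0, hx0⟩
    · have e1 : {r : ℝ | ∃ x ∈ X, r = g x} = ∅ := by simp [hXe]
      have e2 : {r : ℝ | ∃ j : Fin s, ∃ x ∈ X, r = ∑ i, γ j i * Q i x} = ∅ := by
        simp [hXe]
      rw [e1, e2]
    · set A := {r : ℝ | ∃ x ∈ X, r = g x} with hA
      set B := {r : ℝ | ∃ j : Fin s, ∃ x ∈ X, r = ∑ i, γ j i * Q i x} with hB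
      have hAB : A ⊆ B := by
        rintro r ⟨x, hx, rfl⟩
        obtain ⟨j0, h1, -⟩ := hkey x
        exact ⟨j0, x, hx, h1⟩
      have hBlb : ∀ r ∈ B, -C ≤ r := by
        rintro r ⟨j, x, hx, rfl⟩
        exact neg_le_of_abs_le (hLb j x hx)
      have hBbdd : BddBelow B := ⟨-C, hBlb⟩
      have hAbdd : BddBelow A := hBbdd.mono hAB
      have hAne : A.Nonempty := ⟨g x0, x0, hx0, rfl⟩
      have hBne : B.Nonempty := hAne.mono hAB
      refine le_antisymm (le_csInf hBne ?_) (csInf_le_csInf hBbdd hAne hAB)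
      rintro r ⟨j, x, hx, rfl⟩
      obtain ⟨j0, h1, h2⟩ := hkey x
      calc sInf A ≤ g x := csInf_le hAbdd ⟨x, hx, rfl⟩
      _ ≤ ∑ i, γ j i * Q i x := h1 ▸ h2 j
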